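/- Suppose the inf-sup constant satisfies β := inf_{q≠0} sup_{v≠0} b(v,q)/(‖q‖_Q‖v‖_V) ≥ β₀ > 0 for some β₀ > 0, and K is nonempty. Then the mixed problem — find (u, λ) ∈ V × M such that a(u,v) + b(v,λ) = f(v) for all v ∈ V and b(u, q − λ) ≤ g(q − λ) for all q ∈ M — has a unique solution. Furthermore, if (u, λ) solves this mixed problem, then u solves the variational inequality: u ∈ K and a(u, v − u) ≥ f(v − u) for all v ∈ K. -/

import Mathlib

open scoped RealInnerProductSpace

section LS
variable {E : Type*} [NormedAddCommGroup E] [InnerProductSpace ℝ E] [CompleteSpace E]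

lemma exists_proj' (K : Set E) (hne : K.Nonempty) (hcl : IsClosed K) (hcv : Convex ℝ K) (x : E) :
    ∃ v ∈ K, ∀ w ∈ K, ⟪x - v, w - v⟫ ≤ 0 := by
  obtain ⟨v, hv, hmin⟩ := exists_norm_eq_iInf_of_complete_convex hne hcl.isComplete hcv x
  exact ⟨v, hv, (norm_eq_iInf_iff_real_inner_le_zero hcv hv).1 hmin⟩

lemma lions_stampacchia (a : E →L[ℝ] E →L[ℝ] ℝ) (α : ℝ) (hα : 0 < α)
    (hcoer : ∀ v, α * ‖v‖ ^ 2 ≤ a v v) (f : E →L[ℝ] ℝ)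
    (K : Set E) (hne : K.Nonempty) (hcl : IsClosed K) (hcv : Convex ℝ K) :
    ∃ u ∈ K, ∀ v ∈ K, f (v - u) ≤ a u (v - u) := by
  classical
  choose P hPmem hPineq using exists_proj' K hne hcl hcv
  have hPnonexp : ∀ x y, ‖P x - P y‖ ≤ ‖x - y‖ := by
    intro x y
    set d := P x - P y with hd
    have h1 : ⟪x - P x, P y - P x⟫ ≤ 0 := hPineq x (P y) (hPmem y)
    have h2 : ⟪y - P y, P x - P y⟫ ≤ 0 := hPineq y (P x) (hPmem x)
    have e1 : ⟪x - P x, P y - P x⟫ = -⟪x - P x, d⟫ := by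
      rw [show P y - P x = -d by rw [hd]; abel, inner_neg_right]
    have e2 : y - P y - (x - P x) = y - x + d := by rw [hd]; abel
    have e3 : ⟪y - P y, d⟫ - ⟪x - P x, d⟫ = ⟪y - x, d⟫ + ‖d‖ ^ 2 := by
      rw [← inner_sub_left, e2, inner_add_left, real_inner_self_eq_norm_sq]
    have key : ‖d‖ ^ 2 ≤ ⟪x - y, d⟫ := by
      have e4 : ⟪y - x, d⟫ = -⟪x - y, d⟫ := by
        rw [show y - x = -(x - y) by abel, inner_neg_left]
      rw [e1] at h1
      nlinarith [h1, h2, e3, e4]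
    rcases eq_or_ne d 0 with h | h
    · rw [hd] at h ⊢
      rw [h]
      simp
    · have hn : 0 < ‖d‖ := norm_pos_iff.2 h
      have := key.trans (real_inner_le_norm (x - y) d)
      calc ‖P x - P y‖ = ‖d‖ := by rw [hd]
        _ ≤ ‖x - y‖ := by nlinarith
  -- Riesz representatives
  set A : E → E := fun w => (InnerProductSpace.toDual ℝ E).symm (a w) with hA
  have hAinner : ∀ w v, ⟪A w, v⟫ = a w v := fun w v => InnerProductSpace.toDual_symm_apply
  have hAsub : ∀ w₁ w₂, A w₁ - A w₂ = A (w₁ - w₂) := by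
    intro w₁ w₂; simp only [hA, map_sub]
  have hAnorm : ∀ w, ‖A w‖ ≤ ‖a‖ * ‖w‖ := by
    intro w
    simp only [hA, LinearIsometryEquiv.norm_map]
    exact a.le_opNorm w
  set F : E := (InnerProductSpace.toDual ℝ E).symm f with hF
  have hFinner : ∀ v, ⟪F, v⟫ = f v := fun v => InnerProductSpace.toDual_symm_apply
  clear_value A F
  clear hA hF
  obtain ⟨γ, hγpos, hAγ⟩ : ∃ γ : ℝ, 0 < γ ∧ (α ≤ γ ∧ ∀ w, ‖A w‖ ≤ γ * ‖w‖) := by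
    refine ⟨‖a‖ + α, by positivity, by linarith [norm_nonneg a], fun w => (hAnorm w).trans ?_⟩
    nlinarith [norm_nonneg w, norm_nonneg a]
  obtain ⟨hαγ, hAγ⟩ := hAγ
  -- numeric contraction facts
  obtain ⟨ρ, c, hρpos, hcnn, hclt1, hnum⟩ :
      ∃ ρ c : ℝ, 0 < ρ ∧ 0 ≤ c ∧ c < 1 ∧
        ∀ x y z : ℝ, 0 ≤ y → 0 ≤ z → α * y ^ 2 ≤ x → z ≤ γ * y →
          y ^ 2 - 2 * ρ * x + ρ ^ 2 * z ^ 2 ≤ c ^ 2 * y ^ 2 := by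
    refine ⟨α / γ ^ 2, Real.sqrt (1 - α ^ 2 / γ ^ 2), by positivity, Real.sqrt_nonneg _, ?_, ?_⟩
    · have h1 : α ^ 2 ≤ γ ^ 2 := by nlinarith
      have h2 : α ^ 2 / γ ^ 2 ≤ 1 := by rw [div_le_one (by positivity)]; exact h1
      have hc2 : Real.sqrt (1 - α ^ 2 / γ ^ 2) ^ 2 = 1 - α ^ 2 / γ ^ 2 :=
        Real.sq_sqrt (by linarith)
      nlinarith [Real.sqrt_nonneg (1 - α ^ 2 / γ ^ 2), sq_nonneg α, div_pos (pow_pos hα 2) (pow_pos hγpos 2)]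
    · intro x y z hy hz hxy hzy
      have h1 : α ^ 2 ≤ γ ^ 2 := by nlinarith
      have h2 : α ^ 2 / γ ^ 2 ≤ 1 := by rw [div_le_one (by positivity)]; exact h1
      have hc2 : Real.sqrt (1 - α ^ 2 / γ ^ 2) ^ 2 = 1 - α ^ 2 / γ ^ 2 :=
        Real.sq_sqrt (by linarith)
      rw [hc2]
      have hργ : (α / γ ^ 2) * γ ^ 2 = α := by field_simp
      have key : y ^ 2 - 2 * (α / γ ^ 2) * x + (α / γ ^ 2) ^ 2 * z ^ 2
          ≤ (1 - α ^ 2 / γ ^ 2) * y ^ 2 := by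
        have e1 : 2 * (α / γ ^ 2) * (α * y ^ 2) ≤ 2 * (α / γ ^ 2) * x :=
          mul_le_mul_of_nonneg_left hxy (by positivity)
        have e2 : z ^ 2 ≤ (γ * y) ^ 2 := by nlinarith
        have e3 : (α / γ ^ 2) ^ 2 * z ^ 2 ≤ (α / γ ^ 2) ^ 2 * (γ * y) ^ 2 :=
          mul_le_mul_of_nonneg_left e2 (sq_nonneg _)
        have e4 : y ^ 2 - 2 * (α / γ ^ 2) * (α * y ^ 2) + (α / γ ^ 2) ^ 2 * (γ * y) ^ 2
            = (1 - α ^ 2 / γ ^ 2) * y ^ 2 := by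
          field_simp
          ring
        linarith
      exact key
  set T : E → E := fun w => P (w - ρ • (A w - F)) with hT
  have hTlip : ∀ w₁ w₂, ‖T w₁ - T w₂‖ ≤ c * ‖w₁ - w₂‖ := by
    intro w₁ w₂
    set e := w₁ - w₂ with he
    have diff : (w₁ - ρ • (A w₁ - F)) - (w₂ - ρ • (A w₂ - F)) = e - ρ • A e := by
      rw [he, ← hAsub, smul_sub, smul_sub, smul_sub]; abel
    have step1 : ‖T w₁ - T w₂‖ ≤ ‖e - ρ • A e‖ := by
      rw [hT, ← diff]; exact hPnonexp _ _
    have expand : ‖e - ρ • A e‖ ^ 2 = ‖e‖ ^ 2 - 2 * ρ * ⟪A e, e⟫ + ρ ^ 2 * ‖A e‖ ^ 2 := by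
      rw [norm_sub_sq_real, real_inner_smul_right, norm_smul, real_inner_comm]
      simp only [Real.norm_eq_abs, abs_of_pos hρpos, mul_pow]
      ring
    have hcoe : α * ‖e‖ ^ 2 ≤ ⟪A e, e⟫ := by rw [hAinner]; exact hcoer e
    have bound : ‖e - ρ • A e‖ ^ 2 ≤ c ^ 2 * ‖e‖ ^ 2 := by
      rw [expand]
      exact hnum _ _ _ (norm_nonneg e) (norm_nonneg (A e)) hcoe (hAγ e)
    calc ‖T w₁ - T w₂‖ ≤ ‖e - ρ • A e‖ := step1
      _ ≤ c * ‖e‖ := by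
          nlinarith [norm_nonneg (e - ρ • A e), norm_nonneg e, bound,
            mul_nonneg hcnn (norm_nonneg e)]
  -- fixed point
  haveI : Nonempty K := hne.to_subtype
  haveI : CompleteSpace K := hcl.completeSpace_coe
  set T' : K → K := fun w => ⟨T w.1, by rw [hT]; exact hPmem _⟩ with hT'
  have hT'lip : LipschitzWith c.toNNReal T' := by
    apply LipschitzWith.of_dist_le_mul
    intro x y
    simp only [hT', Subtype.dist_eq, dist_eq_norm]
    calc ‖T x.1 - T y.1‖ ≤ c * ‖x.1 - y.1‖ := hTlip _ _
      _ = c.toNNReal * ‖x.1 - y.1‖ := by rw [Real.coe_toNNReal c hcnn]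
  have hcontr : ContractingWith c.toNNReal T' :=
    ⟨by rw [← NNReal.coe_lt_one, Real.coe_toNNReal c hcnn]; exact hclt1, hT'lip⟩
  obtain ⟨u, hu⟩ : ∃ u : K, T' u = u := ⟨hcontr.fixedPoint T', hcontr.fixedPoint_isFixedPt⟩
  refine ⟨u.1, u.2, ?_⟩
  intro v hv
  have hfix : P (u.1 - ρ • (A u.1 - F)) = u.1 := by
    have := congrArg Subtype.val hu
    simpa [hT', hT] using this
  have hpr := hPineq (u.1 - ρ • (A u.1 - F)) v hv
  rw [hfix] at hpr
  have hsimp : (u.1 - ρ • (A u.1 - F)) - u.1 = -(ρ • (A u.1 - F)) := by abel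
  rw [hsimp, inner_neg_left, neg_nonpos, real_inner_smul_left] at hpr
  have h2 : 0 ≤ ⟪A u.1 - F, v - u.1⟫ := by nlinarith
  rw [inner_sub_left, hAinner, hFinner] at h2
  linarith

end LS
section Main

open scoped RealInnerProductSpace

set_option maxHeartbeats 1000000 in
set_option synthInstance.maxHeartbeats 1000000 in
theorem stmt_2 {V Q : Type*}
    [NormedAddCommGroup V] [InnerProductSpace ℝ V] [CompleteSpace V]
    [NormedAddCommGroup Q] [InnerProductSpace ℝ Q] [CompleteSpace Q]
    (a : V →L[ℝ] V →L[ℝ] ℝ) (α : ℝ) (hα : 0 < α)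
    (hcoer : ∀ v : V, α * ‖v‖ ^ 2 ≤ a v v)
    (b : V →L[ℝ] Q →L[ℝ] ℝ) (f : V →L[ℝ] ℝ) (g : Q →L[ℝ] ℝ)
    (M : Set Q) (hMne : M.Nonempty) (hMcl : IsClosed M) (hMcv : Convex ℝ M)
    (hMcone : ∀ c : ℝ, 0 ≤ c → ∀ q ∈ M, c • q ∈ M)
    (β₀ : ℝ) (hβ₀ : 0 < β₀)
    (hinfsup : ∀ q : Q, β₀ * ‖q‖ ≤ ‖b.flip q‖)
    (hKne : {v : V | ∀ q ∈ M, b v q ≤ g q}.Nonempty) :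
    (∃! p : V × Q, p.2 ∈ M ∧ (∀ v : V, a p.1 v + b v p.2 = f v) ∧
        (∀ q ∈ M, b p.1 (q - p.2) ≤ g (q - p.2))) ∧
    (∀ u : V, ∀ lam : Q, lam ∈ M →
      (∀ v : V, a u v + b v lam = f v) →
      (∀ q ∈ M, b u (q - lam) ≤ g (q - lam)) →
      (∀ q ∈ M, b u q ≤ g q) ∧
      ∀ v : V, (∀ q ∈ M, b v q ≤ g q) → f (v - u) ≤ a u (v - u)) := by
  classical
  set K : Set V := {v : V | ∀ q ∈ M, b v q ≤ g q} with hK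
  -- basic facts about the cone M
  have hM0 : (0 : Q) ∈ M := by
    obtain ⟨q₀, hq₀⟩ := hMne
    simpa using hMcone 0 le_rfl q₀ hq₀
  have hMadd : ∀ q₁ ∈ M, ∀ q₂ ∈ M, q₁ + q₂ ∈ M := by
    intro q₁ h₁ q₂ h₂
    have hmid : (1 / 2 : ℝ) • q₁ + (1 / 2 : ℝ) • q₂ ∈ M :=
      hMcv h₁ h₂ (by norm_num) (by norm_num) (by norm_num)
    have := hMcone 2 (by norm_num) _ hmid
    rw [smul_add, smul_smul, smul_smul] at this
    norm_num at this
    exact this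
  -- Part 2 : a mixed solution gives a VI solution
  have part2 : ∀ u : V, ∀ lam : Q, lam ∈ M →
      (∀ v : V, a u v + b v lam = f v) →
      (∀ q ∈ M, b u (q - lam) ≤ g (q - lam)) →
      (∀ q ∈ M, b u q ≤ g q) ∧
      ∀ v : V, (∀ q ∈ M, b v q ≤ g q) → f (v - u) ≤ a u (v - u) := by
    intro u lam hlam heq hineq
    have hblam_ge : g lam ≤ b u lam := by
      have h := hineq 0 hM0
      rw [zero_sub, map_neg, map_neg] at h
      linarith
    have huK : ∀ q ∈ M, b u q ≤ g q := by
      intro q hq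
      have h := hineq (lam + q) (hMadd lam hlam q hq)
      rw [add_sub_cancel_left] at h
      exact h
    refine ⟨huK, ?_⟩
    intro v hv
    have h1 : b v lam ≤ g lam := hv lam hlam
    have h2 := heq (v - u)
    have h4 : b (v - u) lam = b v lam - b u lam := by
      rw [map_sub]; rfl
    linarith
  -- uniqueness
  have uniq : ∀ p₁ p₂ : V × Q,
      (p₁.2 ∈ M ∧ (∀ v : V, a p₁.1 v + b v p₁.2 = f v) ∧
        (∀ q ∈ M, b p₁.1 (q - p₁.2) ≤ g (q - p₁.2))) →
      (p₂.2 ∈ M ∧ (∀ v : V, a p₂.1 v + b v p₂.2 = f v) ∧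
        (∀ q ∈ M, b p₂.1 (q - p₂.2) ≤ g (q - p₂.2))) → p₁ = p₂ := by
    rintro ⟨u₁, l₁⟩ ⟨u₂, l₂⟩ ⟨hl₁, heq₁, hin₁⟩ ⟨hl₂, heq₂, hin₂⟩
    simp only at hl₁ heq₁ hin₁ hl₂ heq₂ hin₂
    have hsum : b u₁ (l₂ - l₁) + b u₂ (l₁ - l₂) ≤ 0 := by
      have h1 := hin₁ l₂ hl₂
      have h2 := hin₂ l₁ hl₁
      have : g (l₁ - l₂) = -g (l₂ - l₁) := by
        rw [show l₁ - l₂ = -(l₂ - l₁) by abel, map_neg]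
      linarith
    have hbd : ∀ v : V, a (u₁ - u₂) v + b v (l₁ - l₂) = 0 := by
      intro v
      have h1 := heq₁ v
      have h2 := heq₂ v
      have e1 : a (u₁ - u₂) v = a u₁ v - a u₂ v := by rw [map_sub]; rfl
      have e2 : b v (l₁ - l₂) = b v l₁ - b v l₂ := by rw [map_sub]
      linarith
    have hX : a (u₁ - u₂) (u₁ - u₂) ≤ 0 := by
      have h1 := hbd (u₁ - u₂)
      have e1 : b (u₁ - u₂) (l₁ - l₂) = b u₁ l₁ - b u₁ l₂ - b u₂ l₁ + b u₂ l₂ := by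
        rw [map_sub b u₁ u₂, ContinuousLinearMap.sub_apply, map_sub, map_sub]
        ring
      have e4 : b u₁ (l₂ - l₁) = b u₁ l₂ - b u₁ l₁ := by rw [map_sub]
      have e5 : b u₂ (l₁ - l₂) = b u₂ l₁ - b u₂ l₂ := by rw [map_sub]
      linarith
    have hu : u₁ = u₂ := by
      have h1 := hcoer (u₁ - u₂)
      have h2 : ‖u₁ - u₂‖ ^ 2 ≤ 0 := by nlinarith
      have h3 : ‖u₁ - u₂‖ = 0 := by nlinarith [norm_nonneg (u₁ - u₂)]
      rw [norm_eq_zero, sub_eq_zero] at h3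
      exact h3
    have hl : l₁ = l₂ := by
      have hflip : b.flip (l₁ - l₂) = 0 := by
        ext v
        have h1 := hbd v
        rw [hu] at h1
        have e1 : a (u₂ - u₂) v = 0 := by simp
        have : b v (l₁ - l₂) = 0 := by linarith
        simpa [ContinuousLinearMap.flip_apply] using this
      have h2 := hinfsup (l₁ - l₂)
      rw [hflip] at h2
      simp only [norm_zero] at h2
      have h3 : ‖l₁ - l₂‖ = 0 := by nlinarith [norm_nonneg (l₁ - l₂)]
      rw [norm_eq_zero, sub_eq_zero] at h3
      exact h3
    exact Prod.ext hu hl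
  -- K is closed and convex
  have hKcl : IsClosed K := by
    have hrw : K = ⋂ q ∈ M, {v : V | b.flip q v ≤ g q} := by
      ext v
      simp only [hK, Set.mem_setOf_eq, Set.mem_iInter, ContinuousLinearMap.flip_apply]
    rw [hrw]
    exact isClosed_biInter fun q _ => isClosed_le (b.flip q).continuous continuous_const
  have hKcv : Convex ℝ K := by
    intro v₁ h₁ v₂ h₂ s t hs ht hst q hq
    have e1 : b (s • v₁ + t • v₂) q = s * b v₁ q + t * b v₂ q := by
      rw [map_add, map_smul, map_smul]
      rfl
    have i1 : s * b v₁ q ≤ s * g q := mul_le_mul_of_nonneg_left (h₁ q hq) hs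
    have i2 : t * b v₂ q ≤ t * g q := mul_le_mul_of_nonneg_left (h₂ q hq) ht
    have h3 : s * g q + t * g q = g q := by rw [← add_mul, hst, one_mul]
    show b (s • v₁ + t • v₂) q ≤ g q
    rw [e1]
    linarith
  -- solve the VI on K
  obtain ⟨u, huK, huVI⟩ := lions_stampacchia a α hα hcoer f K hKne hKcl hKcv
  -- Riesz representative of the constraint operator
  set Tb : Q → V := fun q => (InnerProductSpace.toDual ℝ V).symm (b.flip q) with hTb
  have hTbinner : ∀ q v, ⟪Tb q, v⟫ = b v q := by
    intro q v
    rw [hTb]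
    exact InnerProductSpace.toDual_symm_apply
  have hTbsub : ∀ q₁ q₂, Tb q₁ - Tb q₂ = Tb (q₁ - q₂) := by
    intro q₁ q₂; simp only [hTb, map_sub]
  have hTbsmul : ∀ (c : ℝ) q, c • Tb q = Tb (c • q) := by
    intro c q; simp only [hTb, map_smul]
  have hTbnorm : ∀ q, ‖Tb q‖ = ‖b.flip q‖ := by
    intro q; simp only [hTb, LinearIsometryEquiv.norm_map]
  have hTbcont : Continuous Tb := by
    simp only [hTb]
    exact (InnerProductSpace.toDual ℝ V).symm.continuous.comp b.flip.continuous
  -- the closed convex cone in V ×₂ ℝ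
  set mk : V × ℝ → WithLp 2 (V × ℝ) := ⇑(WithLp.equiv 2 (V × ℝ)).symm with hmk
  have hproj1 : Continuous fun z : WithLp 2 (V × ℝ) => z.fst :=
    continuous_fst.comp (WithLp.prodContinuousLinearEquiv 2 ℝ V ℝ).continuous
  have hproj2 : Continuous fun z : WithLp 2 (V × ℝ) => z.snd :=
    continuous_snd.comp (WithLp.prodContinuousLinearEquiv 2 ℝ V ℝ).continuous
  set S : ConvexCone ℝ (WithLp 2 (V × ℝ)) :=
    { carrier := {x : WithLp 2 (V × ℝ) | ∃ q ∈ M, x.fst = Tb q ∧ g q ≤ x.snd}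
      smul_mem' := by
        rintro c hc x ⟨q, hqM, hx1, hx2⟩
        refine ⟨c • q, hMcone c hc.le q hqM, ?_, ?_⟩
        · show c • x.fst = Tb (c • q)
          rw [hx1, hTbsmul]
        · show g (c • q) ≤ c • x.snd
          rw [map_smul]
          exact mul_le_mul_of_nonneg_left hx2 hc.le
      add_mem' := by
        rintro x ⟨q₁, h₁, hx1, hx2⟩ y ⟨q₂, h₂, hy1, hy2⟩
        refine ⟨q₁ + q₂, hMadd q₁ h₁ q₂ h₂, ?_, ?_⟩
        · show x.fst + y.fst = Tb (q₁ + q₂)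
          have : Tb (q₁ + q₂) = Tb q₁ + Tb q₂ := by simp only [hTb, map_add]
          rw [this, hx1, hy1]
        · show g (q₁ + q₂) ≤ x.snd + y.snd
          rw [map_add]
          exact add_le_add hx2 hy2 } with hS
  have hSmem : ∀ x : WithLp 2 (V × ℝ),
      x ∈ S ↔ ∃ q ∈ M, x.fst = Tb q ∧ g q ≤ x.snd := fun x => Iff.rfl
  have hSne : (S : Set (WithLp 2 (V × ℝ))).Nonempty :=
    ⟨mk (Tb 0, g 0), ⟨0, hM0, rfl, le_rfl⟩⟩
  have hScl : IsClosed (S : Set (WithLp 2 (V × ℝ))) := by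
    apply IsSeqClosed.isClosed
    intro xs x hxs hx
    choose qn hqnM hqnT hqng using hxs
    have hfst : Filter.Tendsto (fun n => (xs n).fst) Filter.atTop (nhds x.fst) :=
      (hproj1.tendsto x).comp hx
    have hsnd : Filter.Tendsto (fun n => (xs n).snd) Filter.atTop (nhds x.snd) :=
      (hproj2.tendsto x).comp hx
    have hqc : CauchySeq qn := by
      rw [Metric.cauchySeq_iff]
      intro ε hε
      obtain ⟨N, hN⟩ := Metric.cauchySeq_iff.1 hfst.cauchySeq (β₀ * ε) (by positivity)
      refine ⟨N, fun m hm n hn => ?_⟩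
      have h1 := hN m hm n hn
      have h2 : dist (xs m).fst (xs n).fst = ‖Tb (qn m - qn n)‖ := by
        rw [dist_eq_norm, hqnT m, hqnT n, hTbsub]
      have h3 : β₀ * ‖qn m - qn n‖ ≤ ‖Tb (qn m - qn n)‖ := by
        rw [hTbnorm]; exact hinfsup _
      rw [dist_eq_norm]
      rw [h2] at h1
      nlinarith
    obtain ⟨q, hqlim⟩ := cauchySeq_tendsto_of_complete hqc
    have hqM : q ∈ M := hMcl.mem_of_tendsto hqlim (Filter.Eventually.of_forall hqnM)
    have hTlim : Filter.Tendsto (fun n => (xs n).fst) Filter.atTop (nhds (Tb q)) := by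
      have := (hTbcont.tendsto q).comp hqlim
      exact this.congr fun n => (hqnT n).symm
    have hx1 : x.fst = Tb q := tendsto_nhds_unique hfst hTlim
    have hx2 : g q ≤ x.snd := by
      have hglim : Filter.Tendsto (fun n => g (qn n)) Filter.atTop (nhds (g q)) :=
        (g.continuous.tendsto q).comp hqlim
      exact le_of_tendsto_of_tendsto' hglim hsnd fun n => hqng n
    exact ⟨q, hqM, hx1, hx2⟩
  -- the target point
  set Fv : V := (InnerProductSpace.toDual ℝ V).symm (f - a u) with hFv
  have hFvinner : ∀ v, ⟪Fv, v⟫ = f v - a u v := by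
    intro v
    rw [hFv]
    exact InnerProductSpace.toDual_symm_apply
  set x₀ : WithLp 2 (V × ℝ) := mk (Fv, f u - a u u) with hx₀
  have hinnerH : ∀ x y : WithLp 2 (V × ℝ), ⟪x, y⟫ = ⟪x.fst, y.fst⟫ + x.snd * y.snd := by
    intro x y
    simp [WithLp.prod_inner_apply, RCLike.inner_apply, mul_comm]
  -- the key separation step
  have hx₀S : x₀ ∈ S := by
    by_contra hxn
    obtain ⟨y, hy1, hy2⟩ :=
      have hTb0 : Tb 0 = 0 := by simpa using (hTbsub 0 0).symm
      have h0 : (0 : WithLp 2 (V × ℝ)) ∈ S :=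
        ⟨0, hM0, by rw [hTb0]; rfl, by show g 0 ≤ (0 : ℝ); simp⟩
      let C : ProperCone ℝ (WithLp 2 (V × ℝ)) :=
        { carrier := (S : Set (WithLp 2 (V × ℝ)))
          add_mem' := fun ha hb => S.add_mem ha hb
          zero_mem' := h0
          smul_mem' := by
            rintro ⟨c, hc⟩ x hx
            rcases hc.eq_or_lt with rfl | hpos
            · show (0 : ℝ) • x ∈ S
              rw [zero_smul]; exact h0
            · exact S.smul_mem hpos hx
          isClosed' := hScl }
      ProperCone.hyperplane_separation' C hxn
    have hyq : ∀ q ∈ M, ∀ s : ℝ, 0 ≤ s → 0 ≤ b y.fst q + (g q + s) * y.snd := by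
      intro q hq s hs
      have hmem : mk (Tb q, g q + s) ∈ S := ⟨q, hq, rfl, by show g q ≤ g q + s; linarith⟩
      have := hy1 _ hmem
      rw [hinnerH] at this
      have e1 : (mk (Tb q, g q + s)).fst = Tb q := rfl
      have e2 : (mk (Tb q, g q + s)).snd = g q + s := rfl
      rw [e1, e2, hTbinner] at this
      linarith
    have ht : 0 ≤ y.snd := by
      have := hyq 0 hM0 1 zero_le_one
      simp only [map_zero, ContinuousLinearMap.zero_apply, zero_add, one_mul] at this
      have e0 : b y.fst (0 : Q) = 0 := by simp
      linarith [this]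
    have hq0 : ∀ q ∈ M, 0 ≤ b y.fst q + g q * y.snd := by
      intro q hq
      have := hyq q hq 0 le_rfl
      linarith
    have hy2' : ⟪y.fst, Fv⟫ + y.snd * (f u - a u u) < 0 := by
      rw [hinnerH] at hy2
      have e1 : (x₀).fst = Fv := rfl
      have e2 : (x₀).snd = f u - a u u := rfl
      rw [e1, e2] at hy2
      linarith [real_inner_comm Fv y.fst]
    have hyFv : ⟪y.fst, Fv⟫ = f y.fst - a u y.fst := by
      rw [real_inner_comm]; exact hFvinner y.fst
    rcases eq_or_lt_of_le ht with ht0 | htpos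
    · -- t = 0
      have hw : u - y.fst ∈ K := by
        intro q hq
        have e1 : b (u - y.fst) q = b u q - b y.fst q := by rw [map_sub]; rfl
        have h1 := hq0 q hq
        rw [← ht0] at h1
        have h2 : 0 ≤ b y.fst q := by linarith
        have h3 := huK q hq
        rw [e1]
        linarith
      have h4 := huVI (u - y.fst) hw
      have e2 : (u - y.fst) - u = -y.fst := by abel
      rw [e2, map_neg, map_neg] at h4
      rw [hyFv, ← ht0] at hy2'
      linarith
    · -- t > 0
      set w : V := (-(1 / y.snd)) • y.fst with hw
      have hwK : w ∈ K := by
        intro q hq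
        have e1 : b w q = (-(1 / y.snd)) * b y.fst q := by
          rw [hw, map_smul]; rfl
        have h1 := hq0 q hq
        have h2 : (-(1 / y.snd)) * b y.fst q ≤ g q := by
          rw [neg_mul, neg_le]
          rw [div_mul_eq_mul_div, le_div_iff₀ htpos] at *
          nlinarith
        rw [e1]; exact h2
      have h4 := huVI w hwK
      have e3 : f (w - u) = f w - f u := by rw [map_sub]
      have e4 : a u (w - u) = a u w - a u u := by rw [map_sub]
      have e5 : f w - a u w = (-(1 / y.snd)) * (f y.fst - a u y.fst) := by
        rw [hw, map_smul, map_smul]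
        show (-(1 / y.snd)) * f y.fst - (-(1 / y.snd)) * a u y.fst = _
        ring
      rw [hyFv] at hy2'
      have h6 : f w - a u w ≤ f u - a u u := by linarith
      rw [e5] at h6
      have h7 : f y.fst - a u y.fst < -(y.snd * (f u - a u u)) := by linarith
      have h8 : (-(1 / y.snd)) * (f y.fst - a u y.fst) > f u - a u u := by
        rw [neg_mul, gt_iff_lt, lt_neg]
        rw [div_mul_eq_mul_div, div_lt_iff₀ htpos] at *
        nlinarith
      linarith
  -- extract the multiplier
  obtain ⟨lam, hlamM, hlamT, hlamg⟩ := hx₀S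
  have hlamT' : Fv = Tb lam := hlamT
  have hlamg' : g lam ≤ f u - a u u := hlamg
  have heqn : ∀ v : V, a u v + b v lam = f v := by
    intro v
    have h1 : b v lam = ⟪Tb lam, v⟫ := (hTbinner lam v).symm
    rw [← hlamT', hFvinner] at h1
    linarith
  have hbulam : b u lam = f u - a u u := by
    have h1 : b u lam = ⟪Tb lam, u⟫ := (hTbinner lam u).symm
    rw [← hlamT', hFvinner] at h1
    exact h1
  have hcompl : ∀ q ∈ M, b u (q - lam) ≤ g (q - lam) := by
    intro q hq
    have e1 : b u (q - lam) = b u q - b u lam := by rw [map_sub]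
    have e2 : g (q - lam) = g q - g lam := by rw [map_sub]
    have h1 := huK q hq
    rw [e1, e2, hbulam]
    linarith
  constructor
  · exact ⟨(u, lam), ⟨hlamM, heqn, hcompl⟩, fun p hp => uniq p (u, lam) hp ⟨hlamM, heqn, hcompl⟩⟩
  · exact part2

end Main
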